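/- arXiv:2002.11598 — 3 statements merged into one kernel-verified Lean document; each statement's English description precedes it below -/
import Mathlib

section
/- Let n ≥ 1, ξ ∈ ℝⁿ a unit vector, τ ∈ ℝ with τ ≠ 0, V : ℝ^{1+n} → ℝ continuous, and let v₀, v₁, v₂ : ℝ^{1+n} → ℂ be of class C². Set φ(t,x) = −t + ξ·x and suppose the transport equations hold: ∂_t v₀ + ξ·∇_x v₀ = 0, and −2i(∂_t v_k + ξ·∇_x v_k) + (□ + V)v_{k−1} = 0 for k = 1, 2. Then with v = v₀ + τ^{−1} v₁ + τ^{−2} v₂ one has, for all (t,x): (□ + V)(e^{iτφ} v)(t,x) = τ^{−2} e^{iτφ(t,x)} ((□ + V)v₂)(t,x). -/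
open Real

open scoped RealInnerProductSpace

/-- Partial derivative in the time variable of a function on `ℝ × ℝⁿ`. -/
noncomputable def partialT {n : ℕ} (u : ℝ × EuclideanSpace ℝ (Fin n) → ℂ) :
    ℝ × EuclideanSpace ℝ (Fin n) → ℂ :=
  fun p => fderiv ℝ u p (1, 0)

/-- Partial derivative in the `j`-th spatial variable of a function on `ℝ × ℝⁿ`. -/
noncomputable def partialX {n : ℕ} (j : Fin n) (u : ℝ × EuclideanSpace ℝ (Fin n) → ℂ) :
    ℝ × EuclideanSpace ℝ (Fin n) → ℂ :=
  fun p => fderiv ℝ u p (0, EuclideanSpace.single j 1)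

/-- The d'Alembert (wave) operator `□ = ∂_t² − Δ_x` on `ℝ × ℝⁿ`. -/
noncomputable def waveOp {n : ℕ} (u : ℝ × EuclideanSpace ℝ (Fin n) → ℂ) :
    ℝ × EuclideanSpace ℝ (Fin n) → ℂ :=
  fun p => partialT (partialT u) p - ∑ j : Fin n, partialX j (partialX j u) p

variable {n : ℕ}



lemma contDiff_dw {u : ℝ × EuclideanSpace ℝ (Fin n) → ℂ} (hu : ContDiff ℝ 2 u)
    (w : ℝ × EuclideanSpace ℝ (Fin n)) :
    ContDiff ℝ 1 (fun p => fderiv ℝ u p w) :=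
  (ContinuousLinearMap.apply ℝ ℂ w).contDiff.comp (hu.fderiv_right (by norm_num))

lemma dw_comb {f g h : ℝ × EuclideanSpace ℝ (Fin n) → ℂ} (a b : ℂ)
    {p : ℝ × EuclideanSpace ℝ (Fin n)}
    (hf : DifferentiableAt ℝ f p) (hg : DifferentiableAt ℝ g p)
    (hh : DifferentiableAt ℝ h p) (w : ℝ × EuclideanSpace ℝ (Fin n)) :
    fderiv ℝ (fun q => f q + a * g q + b * h q) p w
      = fderiv ℝ f p w + a * fderiv ℝ g p w + b * fderiv ℝ h p w := by
  have H : HasFDerivAt (fun q => f q + a * g q + b * h q)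
      (fderiv ℝ f p + a • fderiv ℝ g p + b • fderiv ℝ h p) p :=
    (hf.hasFDerivAt.add ((hg.hasFDerivAt).const_mul a)).add ((hh.hasFDerivAt).const_mul b)
  rw [H.fderiv]; simp

noncomputable def phiL (ξ : EuclideanSpace ℝ (Fin n)) :
    (ℝ × EuclideanSpace ℝ (Fin n)) →L[ℝ] ℝ :=
  (innerSL ℝ ξ).comp (ContinuousLinearMap.snd ℝ ℝ (EuclideanSpace ℝ (Fin n)))
    - ContinuousLinearMap.fst ℝ ℝ (EuclideanSpace ℝ (Fin n))

lemma phiL_apply (ξ : EuclideanSpace ℝ (Fin n)) (q : ℝ × EuclideanSpace ℝ (Fin n)) :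
    phiL ξ q = -q.1 + ⟪ξ, q.2⟫ := by
  simp [phiL, PiLp.inner_apply]; ring

noncomputable def Gc (ξ : EuclideanSpace ℝ (Fin n)) (τ : ℝ) :
    (ℝ × EuclideanSpace ℝ (Fin n)) →L[ℝ] ℂ :=
  (Complex.I * τ) • (Complex.ofRealCLM.comp (phiL ξ))

lemma Gc_apply (ξ : EuclideanSpace ℝ (Fin n)) (τ : ℝ) (q : ℝ × EuclideanSpace ℝ (Fin n)) :
    Gc ξ τ q = Complex.I * τ * ((phiL ξ q : ℝ) : ℂ) := by
  simp [Gc]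

noncomputable def Efn (ξ : EuclideanSpace ℝ (Fin n)) (τ : ℝ) :
    ℝ × EuclideanSpace ℝ (Fin n) → ℂ :=
  fun q => Complex.exp (Gc ξ τ q)

lemma hasFDerivAt_Efn (ξ : EuclideanSpace ℝ (Fin n)) (τ : ℝ) (p : ℝ × EuclideanSpace ℝ (Fin n)) :
    HasFDerivAt (Efn ξ τ) (Efn ξ τ p • Gc ξ τ) p :=
  ((Gc ξ τ).hasFDerivAt).cexp

lemma dw_E_mul (ξ : EuclideanSpace ℝ (Fin n)) (τ : ℝ)
    {u : ℝ × EuclideanSpace ℝ (Fin n) → ℂ} {p : ℝ × EuclideanSpace ℝ (Fin n)}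
    (hu : DifferentiableAt ℝ u p) (w : ℝ × EuclideanSpace ℝ (Fin n)) :
    fderiv ℝ (fun q => Efn ξ τ q * u q) p w
      = Efn ξ τ p * (Gc ξ τ w * u p + fderiv ℝ u p w) := by
  have H := ((hasFDerivAt_Efn ξ τ p).mul hu.hasFDerivAt).fderiv
  rw [show (fun q => Efn ξ τ q * u q) = Efn ξ τ * u from rfl, H]; simp; ring

lemma dw2_E_mul (ξ : EuclideanSpace ℝ (Fin n)) (τ : ℝ)
    {u : ℝ × EuclideanSpace ℝ (Fin n) → ℂ} (hu : ContDiff ℝ 2 u)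
    (w w' p : ℝ × EuclideanSpace ℝ (Fin n)) :
    fderiv ℝ (fun q => fderiv ℝ (fun r => Efn ξ τ r * u r) q w) p w'
      = Efn ξ τ p * (Gc ξ τ w' * Gc ξ τ w * u p + Gc ξ τ w' * fderiv ℝ u p w
          + Gc ξ τ w * fderiv ℝ u p w' + fderiv ℝ (fun q => fderiv ℝ u q w) p w') := by
  have hud : Differentiable ℝ u := hu.differentiable (by norm_num)
  have h1 : (fun q => fderiv ℝ (fun r => Efn ξ τ r * u r) q w)
      = fun q => Efn ξ τ q * (Gc ξ τ w * u q + fderiv ℝ u q w) :=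
    funext fun q => dw_E_mul ξ τ (hud q) w
  rw [h1]
  have hg : DifferentiableAt ℝ (fun q => fderiv ℝ u q w) p :=
    ((contDiff_dw hu w).differentiable (by norm_num)) p
  have hh : DifferentiableAt ℝ (fun q => Gc ξ τ w * u q + fderiv ℝ u q w) p :=
    (((hud p).const_mul _).add hg)
  rw [dw_E_mul ξ τ hh w']
  have H : HasFDerivAt (fun q => Gc ξ τ w * u q + fderiv ℝ u q w)
      (Gc ξ τ w • fderiv ℝ u p + fderiv ℝ (fun q => fderiv ℝ u q w) p) p :=
    (((hud p).hasFDerivAt).const_mul (Gc ξ τ w)).add hg.hasFDerivAt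
  rw [H.fderiv]
  simp only [ContinuousLinearMap.add_apply, ContinuousLinearMap.smul_apply, smul_eq_mul]
  ring

lemma Gc_T (ξ : EuclideanSpace ℝ (Fin n)) (τ : ℝ) :
    Gc ξ τ ((1, 0) : ℝ × EuclideanSpace ℝ (Fin n)) = -(Complex.I * τ) := by
  rw [Gc_apply, phiL_apply]; simp

lemma Gc_X (ξ : EuclideanSpace ℝ (Fin n)) (τ : ℝ) (j : Fin n) :
    Gc ξ τ ((0, EuclideanSpace.single j 1) : ℝ × EuclideanSpace ℝ (Fin n))
      = Complex.I * τ * (ξ j : ℂ) := by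
  rw [Gc_apply, phiL_apply]; simp [real_inner_comm, EuclideanSpace.inner_single_right]

lemma waveOp_E_mul (ξ : EuclideanSpace ℝ (Fin n)) (hξ : ‖ξ‖ = 1) (τ : ℝ)
    {u : ℝ × EuclideanSpace ℝ (Fin n) → ℂ} (hu : ContDiff ℝ 2 u)
    (p : ℝ × EuclideanSpace ℝ (Fin n)) :
    waveOp (fun q => Efn ξ τ q * u q) p
      = Efn ξ τ p * (-2 * Complex.I * τ *
          (partialT u p + ∑ j : Fin n, (ξ j : ℂ) * partialX j u p) + waveOp u p) := by
  have hsumR : (∑ j : Fin n, (ξ j) ^ 2) = 1 := by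
    have h1 : ⟪ξ, ξ⟫ = 1 := by rw [real_inner_self_eq_norm_sq, hξ]; norm_num
    rw [PiLp.inner_apply] at h1
    simpa [sq] using h1
  have hsum : (∑ j : Fin n, ((ξ j : ℂ)) ^ 2) = 1 := by
    have := congrArg (Complex.ofReal) hsumR
    push_cast at this
    simpa using this
  unfold waveOp partialT partialX
  rw [dw2_E_mul ξ τ hu (1, 0) (1, 0) p]
  rw [Finset.sum_congr rfl (fun j _ =>
    dw2_E_mul ξ τ hu (0, EuclideanSpace.single j 1) (0, EuclideanSpace.single j 1) p)]
  simp only [Gc_T, Gc_X]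
  rw [Finset.sum_congr rfl (fun j (_ : j ∈ Finset.univ) => show
    Efn ξ τ p * (Complex.I * τ * (ξ j : ℂ) * (Complex.I * τ * (ξ j : ℂ)) * u p
        + Complex.I * τ * (ξ j : ℂ) * fderiv ℝ u p (0, EuclideanSpace.single j 1)
        + Complex.I * τ * (ξ j : ℂ) * fderiv ℝ u p (0, EuclideanSpace.single j 1)
        + fderiv ℝ (fun q => fderiv ℝ u q (0, EuclideanSpace.single j 1)) p
            (0, EuclideanSpace.single j 1))
      = (-(τ : ℂ) ^ 2 * Efn ξ τ p * u p) * ((ξ j : ℂ)) ^ 2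
        + (2 * Complex.I * τ * Efn ξ τ p) *
            ((ξ j : ℂ) * fderiv ℝ u p (0, EuclideanSpace.single j 1))
        + Efn ξ τ p * fderiv ℝ (fun q => fderiv ℝ u q (0, EuclideanSpace.single j 1)) p
            (0, EuclideanSpace.single j 1) from by
      have hI : Complex.I * Complex.I = -1 := Complex.I_mul_I
      ring_nf
      rw [Complex.I_sq]
      ring)]
  rw [Finset.sum_add_distrib, Finset.sum_add_distrib, ← Finset.mul_sum, ← Finset.mul_sum,
    ← Finset.mul_sum, hsum]
  have hI : Complex.I ^ 2 = -1 := Complex.I_sq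
  ring_nf
  rw [Complex.I_sq]
  ring

lemma dw_comb' {f g h : ℝ × EuclideanSpace ℝ (Fin n) → ℂ} (a b : ℂ)
    (hf : ContDiff ℝ 2 f) (hg : ContDiff ℝ 2 g) (hh : ContDiff ℝ 2 h)
    (w : ℝ × EuclideanSpace ℝ (Fin n)) :
    (fun p => fderiv ℝ (fun q => f q + a * g q + b * h q) p w)
      = fun p => fderiv ℝ f p w + a * fderiv ℝ g p w + b * fderiv ℝ h p w :=
  funext fun p => dw_comb a b ((hf.differentiable (by norm_num)) p)
    ((hg.differentiable (by norm_num)) p) ((hh.differentiable (by norm_num)) p) w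

lemma dw2_comb {f g h : ℝ × EuclideanSpace ℝ (Fin n) → ℂ} (a b : ℂ)
    (hf : ContDiff ℝ 2 f) (hg : ContDiff ℝ 2 g) (hh : ContDiff ℝ 2 h)
    (w w' p0 : ℝ × EuclideanSpace ℝ (Fin n)) :
    fderiv ℝ (fun p => fderiv ℝ (fun q => f q + a * g q + b * h q) p w) p0 w'
      = fderiv ℝ (fun p => fderiv ℝ f p w) p0 w'
        + a * fderiv ℝ (fun p => fderiv ℝ g p w) p0 w'
        + b * fderiv ℝ (fun p => fderiv ℝ h p w) p0 w' := by
  rw [dw_comb' a b hf hg hh w]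
  exact dw_comb a b ((contDiff_dw hf w).differentiable (by norm_num) p0)
    ((contDiff_dw hg w).differentiable (by norm_num) p0)
    ((contDiff_dw hh w).differentiable (by norm_num) p0) w'

lemma alg (τ T0 T1 T2 W0 W1 W2 u0 u1 u2 V : ℂ) (hτ : τ ≠ 0)
    (h0 : T0 = 0)
    (h1 : -2 * Complex.I * T1 + (W0 + V * u0) = 0)
    (h2 : -2 * Complex.I * T2 + (W1 + V * u1) = 0) :
    -2 * Complex.I * τ * (T0 + τ⁻¹ * T1 + (τ ^ 2)⁻¹ * T2)
        + (W0 + τ⁻¹ * W1 + (τ ^ 2)⁻¹ * W2)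
        + V * (u0 + τ⁻¹ * u1 + (τ ^ 2)⁻¹ * u2)
      = (τ ^ 2)⁻¹ * (W2 + V * u2) := by
  have hs : τ * τ⁻¹ = 1 := mul_inv_cancel₀ hτ
  have hp : (τ ^ 2)⁻¹ = τ⁻¹ * τ⁻¹ := by rw [sq, mul_inv]
  rw [hp, h0]
  linear_combination h1 + τ⁻¹ * h2
    + (-2 * Complex.I * T1 - 2 * Complex.I * τ⁻¹ * T2) * hs

section main
variable (ξ : EuclideanSpace ℝ (Fin n)) (τ : ℝ)

lemma lin_T {f g h : ℝ × EuclideanSpace ℝ (Fin n) → ℂ} (a b : ℂ)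
    (hf : ContDiff ℝ 2 f) (hg : ContDiff ℝ 2 g) (hh : ContDiff ℝ 2 h)
    (p : ℝ × EuclideanSpace ℝ (Fin n)) :
    partialT (fun q => f q + a * g q + b * h q) p
      = partialT f p + a * partialT g p + b * partialT h p :=
  dw_comb a b ((hf.differentiable (by norm_num)) p) ((hg.differentiable (by norm_num)) p)
    ((hh.differentiable (by norm_num)) p) (1, 0)

lemma lin_X {f g h : ℝ × EuclideanSpace ℝ (Fin n) → ℂ} (a b : ℂ)
    (hf : ContDiff ℝ 2 f) (hg : ContDiff ℝ 2 g) (hh : ContDiff ℝ 2 h) (j : Fin n)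
    (p : ℝ × EuclideanSpace ℝ (Fin n)) :
    partialX j (fun q => f q + a * g q + b * h q) p
      = partialX j f p + a * partialX j g p + b * partialX j h p :=
  dw_comb a b ((hf.differentiable (by norm_num)) p) ((hg.differentiable (by norm_num)) p)
    ((hh.differentiable (by norm_num)) p) (0, EuclideanSpace.single j 1)

lemma lin_W {f g h : ℝ × EuclideanSpace ℝ (Fin n) → ℂ} (a b : ℂ)
    (hf : ContDiff ℝ 2 f) (hg : ContDiff ℝ 2 g) (hh : ContDiff ℝ 2 h)
    (p : ℝ × EuclideanSpace ℝ (Fin n)) :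
    waveOp (fun q => f q + a * g q + b * h q) p
      = waveOp f p + a * waveOp g p + b * waveOp h p := by
  unfold waveOp partialT partialX
  rw [dw2_comb a b hf hg hh (1, 0) (1, 0) p]
  rw [Finset.sum_congr rfl (fun j _ =>
    dw2_comb a b hf hg hh (0, EuclideanSpace.single j 1) (0, EuclideanSpace.single j 1) p)]
  rw [Finset.sum_add_distrib, Finset.sum_add_distrib, ← Finset.mul_sum, ← Finset.mul_sum]
  ring

end main


/-- If the amplitudes `v₀, v₁, v₂` satisfy the transport equations
`∂_t v₀ + ξ·∇_x v₀ = 0` and `−2i(∂_t v_k + ξ·∇_x v_k) + (□ + V)v_{k−1} = 0` for `k = 1,2`,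
then the geometric optics ansatz `e^{iτφ}(v₀ + τ⁻¹v₁ + τ⁻²v₂)` with `φ(t,x) = −t + ξ·x`
satisfies `(□ + V)(e^{iτφ}v) = τ⁻² e^{iτφ} (□ + V)v₂` everywhere. -/
theorem stmt4 {n : ℕ} (hn : 1 ≤ n) (ξ : EuclideanSpace ℝ (Fin n)) (hξ : ‖ξ‖ = 1)
    (τ : ℝ) (hτ : τ ≠ 0)
    (V : ℝ × EuclideanSpace ℝ (Fin n) → ℝ) (hV : Continuous V)
    (v₀ v₁ v₂ : ℝ × EuclideanSpace ℝ (Fin n) → ℂ)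
    (hv₀ : ContDiff ℝ 2 v₀) (hv₁ : ContDiff ℝ 2 v₁) (hv₂ : ContDiff ℝ 2 v₂)
    (ht₀ : ∀ p : ℝ × EuclideanSpace ℝ (Fin n),
      partialT v₀ p + ∑ j : Fin n, (ξ j : ℂ) * partialX j v₀ p = 0)
    (ht₁ : ∀ p : ℝ × EuclideanSpace ℝ (Fin n),
      -2 * Complex.I * (partialT v₁ p + ∑ j : Fin n, (ξ j : ℂ) * partialX j v₁ p)
        + (waveOp v₀ p + (V p : ℂ) * v₀ p) = 0)
    (ht₂ : ∀ p : ℝ × EuclideanSpace ℝ (Fin n),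
      -2 * Complex.I * (partialT v₂ p + ∑ j : Fin n, (ξ j : ℂ) * partialX j v₂ p)
        + (waveOp v₁ p + (V p : ℂ) * v₁ p) = 0) :
    ∀ p : ℝ × EuclideanSpace ℝ (Fin n),
      waveOp (fun q => Complex.exp (Complex.I * (τ : ℂ) * ((-q.1 + ⟪ξ, q.2⟫ : ℝ) : ℂ)) *
            (v₀ q + (τ : ℂ)⁻¹ * v₁ q + ((τ : ℂ) ^ 2)⁻¹ * v₂ q)) p
          + (V p : ℂ) *
            (Complex.exp (Complex.I * (τ : ℂ) * ((-p.1 + ⟪ξ, p.2⟫ : ℝ) : ℂ)) *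
              (v₀ p + (τ : ℂ)⁻¹ * v₁ p + ((τ : ℂ) ^ 2)⁻¹ * v₂ p))
        = ((τ : ℂ) ^ 2)⁻¹ * Complex.exp (Complex.I * (τ : ℂ) * ((-p.1 + ⟪ξ, p.2⟫ : ℝ) : ℂ)) *
            (waveOp v₂ p + (V p : ℂ) * v₂ p) := by

  intro p
  set a : ℂ := (τ : ℂ)⁻¹ with ha
  set b : ℂ := ((τ : ℂ) ^ 2)⁻¹ with hb
  have hEq : ∀ q : ℝ × EuclideanSpace ℝ (Fin n),
      Complex.exp (Complex.I * (τ : ℂ) * ((-q.1 + ⟪ξ, q.2⟫ : ℝ) : ℂ)) = Efn ξ τ q := by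
    intro q; rw [Efn, Gc_apply, phiL_apply]
  have hfun : (fun q => Complex.exp (Complex.I * (τ : ℂ) * ((-q.1 + ⟪ξ, q.2⟫ : ℝ) : ℂ)) *
        (v₀ q + a * v₁ q + b * v₂ q))
      = fun q => Efn ξ τ q * (v₀ q + a * v₁ q + b * v₂ q) := by
    funext q; rw [hEq q]
  rw [hfun, hEq p]
  have hu : ContDiff ℝ 2 (fun q => v₀ q + a * v₁ q + b * v₂ q) :=
    (hv₀.add (contDiff_const.mul hv₁)).add (contDiff_const.mul hv₂)
  rw [waveOp_E_mul ξ hξ τ hu p]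
  rw [lin_T a b hv₀ hv₁ hv₂ p, lin_W a b hv₀ hv₁ hv₂ p]
  have hS : (∑ j : Fin n, (ξ j : ℂ) * partialX j (fun q => v₀ q + a * v₁ q + b * v₂ q) p)
      = (∑ j : Fin n, (ξ j : ℂ) * partialX j v₀ p)
        + a * (∑ j : Fin n, (ξ j : ℂ) * partialX j v₁ p)
        + b * (∑ j : Fin n, (ξ j : ℂ) * partialX j v₂ p) := by
    have h1 : ∀ j : Fin n, (ξ j : ℂ) * partialX j (fun q => v₀ q + a * v₁ q + b * v₂ q) p
        = (ξ j : ℂ) * partialX j v₀ p + a * ((ξ j : ℂ) * partialX j v₁ p)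
          + b * ((ξ j : ℂ) * partialX j v₂ p) := fun j => by
      rw [lin_X a b hv₀ hv₁ hv₂ j p]; ring
    rw [Finset.sum_congr rfl fun j _ => h1 j, Finset.sum_add_distrib, Finset.sum_add_distrib,
      ← Finset.mul_sum, ← Finset.mul_sum]
  rw [hS]
  have key := alg (τ : ℂ)
    (partialT v₀ p + ∑ j : Fin n, (ξ j : ℂ) * partialX j v₀ p)
    (partialT v₁ p + ∑ j : Fin n, (ξ j : ℂ) * partialX j v₁ p)
    (partialT v₂ p + ∑ j : Fin n, (ξ j : ℂ) * partialX j v₂ p)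
    (waveOp v₀ p) (waveOp v₁ p) (waveOp v₂ p)
    (v₀ p) (v₁ p) (v₂ p) (V p : ℂ)
    (by exact_mod_cast Complex.ofReal_ne_zero.mpr hτ) (ht₀ p) (ht₁ p) (ht₂ p)
  linear_combination (Efn ξ τ p) * key
end

section
/- Let n ≥ 1, let ξ ∈ ℝⁿ be a unit vector, (s₀, x₀) ∈ ℝ^{1+n}, and let H : ℝ^{1+n} → ℂ be continuous. Define σ(t,x) = (t − s₀ + (x − x₀)·ξ)/2 and w(t,x) = (2i)^{−1} ∫₀^{σ(t,x)} H((t,x) − (σ(t,x) − r)(1,ξ)) dr. Then: (a) w vanishes on the hyperplane Σ = {(t,x) : t − s₀ + (x − x₀)·ξ = 0}; and (b) for every (t,x) ∈ ℝ^{1+n}, the map s ↦ w((t,x) + s(1,ξ)) is differentiable at s = 0 with derivative (2i)^{−1} H(t,x); in other words w solves the characteristic ODE −2i (d/ds) w(γ(s)) + H(γ(s)) = 0 along every light ray γ(s) = γ(0) + s(1,ξ). -/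
open Real MeasureTheory intervalIntegral

open scoped RealInnerProductSpace

/-- With `σ(t,x) = (t − s₀ + (x − x₀)·ξ)/2` and
`w(t,x) = (2i)⁻¹ ∫₀^{σ(t,x)} H((t,x) − (σ(t,x) − r)(1,ξ)) dr`:
(a) `w` vanishes on the hyperplane `Σ = {(t,x) : t − s₀ + (x − x₀)·ξ = 0}`, and
(b) along every light ray `s ↦ (t,x) + s(1,ξ)` the map `s ↦ w((t,x) + s(1,ξ))` is
differentiable at `s = 0` with derivative `(2i)⁻¹ H(t,x)`. -/
theorem stmt5 {n : ℕ} (hn : 1 ≤ n) (ξ : EuclideanSpace ℝ (Fin n)) (hξ : ‖ξ‖ = 1)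
    (s₀ : ℝ) (x₀ : EuclideanSpace ℝ (Fin n))
    (H : ℝ × EuclideanSpace ℝ (Fin n) → ℂ) (hH : Continuous H)
    (σ : ℝ × EuclideanSpace ℝ (Fin n) → ℝ)
    (hσ : ∀ p : ℝ × EuclideanSpace ℝ (Fin n), σ p = (p.1 - s₀ + ⟪p.2 - x₀, ξ⟫) / 2)
    (w : ℝ × EuclideanSpace ℝ (Fin n) → ℂ)
    (hw : ∀ p : ℝ × EuclideanSpace ℝ (Fin n),
      w p = (2 * Complex.I)⁻¹ * ∫ r in (0 : ℝ)..(σ p), H (p - (σ p - r) • ((1 : ℝ), ξ))) :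
    (∀ p : ℝ × EuclideanSpace ℝ (Fin n), p.1 - s₀ + ⟪p.2 - x₀, ξ⟫ = 0 → w p = 0) ∧
      (∀ p : ℝ × EuclideanSpace ℝ (Fin n),
        HasDerivAt (fun s : ℝ => w (p + s • ((1 : ℝ), ξ))) ((2 * Complex.I)⁻¹ * H p) 0) := by
  constructor
  · intro p hp
    rw [hw, hσ, hp]
    simp
  · intro p
    set c := (2 * Complex.I)⁻¹ with hc
    set g : ℝ → ℂ := fun r => H (p - (σ p - r) • ((1 : ℝ), ξ)) with hg
    have hgc : Continuous g := by
      apply hH.comp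
      exact continuous_const.sub ((continuous_const.sub continuous_id).smul continuous_const)
    have key : ∀ s : ℝ, w (p + s • ((1:ℝ), ξ)) = c * ∫ r in (0:ℝ)..(σ p + s), g r := by
      intro s
      rw [hw]
      have hσs : σ (p + s • ((1:ℝ), ξ)) = σ p + s := by
        rw [hσ, hσ]
        have h1 : (p + s • ((1:ℝ), ξ)).1 = p.1 + s * 1 := rfl
        have h2 : (p + s • ((1:ℝ), ξ)).2 = p.2 + s • ξ := rfl
        rw [h1, h2]
        have h3 : ⟪p.2 + s • ξ - x₀, ξ⟫ = ⟪p.2 - x₀, ξ⟫ + s * ⟪ξ, ξ⟫ := by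
          rw [show p.2 + s • ξ - x₀ = (p.2 - x₀) + s • ξ by abel]
          rw [inner_add_left, real_inner_smul_left]
        rw [h3, real_inner_self_eq_norm_sq, hξ]
        ring
      rw [hσs]
      congr 1
      apply intervalIntegral.integral_congr
      intro r _
      simp only [hg]
      congr 1
      rw [show σ p + s - r = (σ p - r) + s by ring, add_smul]
      abel
    have hF : HasDerivAt (fun u : ℝ => ∫ r in (0:ℝ)..u, g r) (g (σ p)) (σ p) :=
      intervalIntegral.integral_hasDerivAt_right (hgc.intervalIntegrable 0 (σ p))
        (hgc.stronglyMeasurable.stronglyMeasurableAtFilter) hgc.continuousAt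
    have hcomp : HasDerivAt (fun s : ℝ => ∫ r in (0:ℝ)..(σ p + s), g r) (g (σ p)) 0 := by
      have hF' : HasDerivAt (fun u : ℝ => ∫ r in (0:ℝ)..u, g r) (g (σ p)) (σ p + 0) := by
        simpa using hF
      exact hF'.comp_const_add (σ p) 0
    have hgp : g (σ p) = H p := by simp [hg, Prod.mk_zero_zero]
    have final := hcomp.const_mul c
    rw [hgp] at final
    have heq : (fun s : ℝ => w (p + s • ((1:ℝ), ξ))) = fun s : ℝ => c * ∫ r in (0:ℝ)..(σ p + s), g r := by
      funext s; exact key s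
    rw [heq]
    exact final
end

section
/- Let n ≥ 1, let {ξ, e₁, …, e_{n−1}} be an orthonormal basis of ℝⁿ, let λ > 0, (s₀, x₀) ∈ ℝ^{1+n}, and let χ : ℝ → ℝ satisfy χ(u) = 0 whenever |u| ≥ 1/(4√n). Define v : ℝ^{1+n} → ℝ by v(t,x) = χ(λ(s₀ − t + (x − x₀)·ξ)) ∏_{k=1}^{n−1} χ(λ (x − x₀)·e_k). Then v(t,x) = 0 whenever the Euclidean distance from (t,x) to the light ray {(s₀ + s, x₀ + s ξ) : s ∈ ℝ} ⊆ ℝ^{1+n} is at least 1/(4λ). In other words, v is supported in the closed tube of radius 1/(4λ) around the light ray through (s₀,x₀) with direction (1,ξ). -/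
open Real

open scoped RealInnerProductSpace

/-- With `{ξ, e₁, …, e_m}` an orthonormal basis of `ℝⁿ` (`n = m + 1 ≥ 1`),
`λ > 0`, and `χ` vanishing outside `(−1/(4√n), 1/(4√n))`, the function
`v(t,x) = χ(λ(s₀ − t + (x − x₀)·ξ)) ∏_k χ(λ(x − x₀)·e_k)` vanishes at every spacetime point
whose Euclidean distance to the light ray `{(s₀ + s, x₀ + s ξ)}` is at least `1/(4λ)`:
`v` is supported in the closed tube of radius `1/(4λ)` around the ray. -/
theorem stmt14 {m : ℕ} (ξ : EuclideanSpace ℝ (Fin (m + 1)))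
    (e : Fin m → EuclideanSpace ℝ (Fin (m + 1)))
    (hON : Orthonormal ℝ (Fin.cons ξ e : Fin (m + 1) → EuclideanSpace ℝ (Fin (m + 1))))
    (lam : ℝ) (hlam : 0 < lam) (s₀ : ℝ) (x₀ : EuclideanSpace ℝ (Fin (m + 1)))
    (χ : ℝ → ℝ) (hχ : ∀ u : ℝ, 1 / (4 * Real.sqrt (m + 1)) ≤ |u| → χ u = 0)
    (v : ℝ × EuclideanSpace ℝ (Fin (m + 1)) → ℝ)
    (hv : ∀ p : ℝ × EuclideanSpace ℝ (Fin (m + 1)),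
      v p = χ (lam * (s₀ - p.1 + ⟪p.2 - x₀, ξ⟫)) *
        ∏ k : Fin m, χ (lam * ⟪p.2 - x₀, e k⟫)) :
    ∀ p : ℝ × EuclideanSpace ℝ (Fin (m + 1)),
      (∀ s : ℝ, 1 / (4 * lam) ≤
        Real.sqrt ((p.1 - (s₀ + s)) ^ 2 + ‖p.2 - (x₀ + s • ξ)‖ ^ 2)) →
      v p = 0 := by
  intro p hp
  by_contra hne
  rw [hv p] at hne
  have h1 : χ (lam * (s₀ - p.1 + ⟪p.2 - x₀, ξ⟫)) ≠ 0 := fun h => hne (by rw [h, zero_mul])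
  have h2 : ∀ k : Fin m, χ (lam * ⟪p.2 - x₀, e k⟫) ≠ 0 := fun k hk =>
    hne (by rw [Finset.prod_eq_zero (Finset.mem_univ k) hk, mul_zero])
  set c : ℝ := 1 / (4 * Real.sqrt (m + 1)) with hc
  have hb1 : |lam * (s₀ - p.1 + ⟪p.2 - x₀, ξ⟫)| < c := by
    by_contra h; exact h1 (hχ _ (le_of_not_gt h))
  have hb2 : ∀ k : Fin m, |lam * ⟪p.2 - x₀, e k⟫| < c := by
    intro k; by_contra h; exact h2 k (hχ _ (le_of_not_gt h))
  set s : ℝ := ⟪p.2 - x₀, ξ⟫ with hs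
  -- orthonormal basis
  have hcard : Fintype.card (Fin (m + 1)) = Module.finrank ℝ (EuclideanSpace ℝ (Fin (m + 1))) := by
    simp
  let b0 := basisOfOrthonormalOfCardEqFinrank hON hcard
  have hb0 : ⇑b0 = Fin.cons ξ e := coe_basisOfOrthonormalOfCardEqFinrank hON hcard
  let b : OrthonormalBasis (Fin (m + 1)) ℝ (EuclideanSpace ℝ (Fin (m + 1))) :=
    b0.toOrthonormalBasis (by rwa [hb0])
  have hb : ⇑b = Fin.cons ξ e := by
    rw [show ⇑b = ⇑b0 from Module.Basis.coe_toOrthonormalBasis b0 _, hb0]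
  set z : EuclideanSpace ℝ (Fin (m + 1)) := p.2 - (x₀ + s • ξ) with hz
  have hzeq : z = (p.2 - x₀) - s • ξ := by rw [hz, sub_add_eq_sub_sub]
  have hξξ : ⟪ξ, ξ⟫ = 1 := by
    have h := hON.1 0
    rw [Fin.cons_zero] at h
    rw [real_inner_self_eq_norm_sq, h, one_pow]
  have hξe : ∀ k : Fin m, ⟪ξ, e k⟫ = 0 := by
    intro k
    have h := hON.2 (i := (0 : Fin (m + 1))) (j := k.succ) (by simp [Fin.succ_ne_zero k, (Fin.succ_ne_zero k).symm])
    simpa [Fin.cons_zero, Fin.cons_succ] using h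
  have hzξ : ⟪z, ξ⟫ = 0 := by
    rw [hzeq, inner_sub_left, real_inner_smul_left, hξξ, ← hs]; ring
  have hze : ∀ k : Fin m, ⟪z, e k⟫ = ⟪p.2 - x₀, e k⟫ := by
    intro k
    rw [hzeq, inner_sub_left, real_inner_smul_left, hξe k]; ring
  have hnorm : ‖z‖ ^ 2 = ∑ k : Fin m, ⟪p.2 - x₀, e k⟫ ^ 2 := by
    rw [← real_inner_self_eq_norm_sq, ← b.sum_inner_mul_inner z z, Fin.sum_univ_succ]
    simp only [hb, Fin.cons_zero, Fin.cons_succ]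
    rw [hzξ, real_inner_comm z ξ, hzξ]
    simp only [hze]
    rw [zero_mul, zero_add]
    congr 1
    ext k
    rw [real_inner_comm z (e k), hze k, sq]
  -- c^2 = 1/(16*(m+1))
  have hmn : (0:ℝ) < (m:ℝ) + 1 := by positivity
  have hcsq : c ^ 2 = 1 / (16 * ((m:ℝ) + 1)) := by
    rw [hc, div_pow, mul_pow, Real.sq_sqrt (by push_cast; positivity)]
    push_cast; ring
  have hcpos : 0 < c := by
    rw [hc]; positivity
  -- bound the sum
  have hsum : ∑ k : Fin m, (lam * ⟪p.2 - x₀, e k⟫) ^ 2 ≤ (m:ℝ) * c ^ 2 := by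
    calc ∑ k : Fin m, (lam * ⟪p.2 - x₀, e k⟫) ^ 2
        ≤ ∑ _k : Fin m, c ^ 2 := by
          apply Finset.sum_le_sum
          intro k _
          have := hb2 k
          calc (lam * ⟪p.2 - x₀, e k⟫) ^ 2 = |lam * ⟪p.2 - x₀, e k⟫| ^ 2 := (sq_abs _).symm
            _ ≤ c ^ 2 := by apply pow_le_pow_left₀ (abs_nonneg _) this.le
      _ = (m:ℝ) * c ^ 2 := by simp [mul_comm]
  have htime : (lam * (p.1 - (s₀ + s))) ^ 2 < c ^ 2 := by
    have h : lam * (p.1 - (s₀ + s)) = -(lam * (s₀ - p.1 + s)) := by ring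
    calc (lam * (p.1 - (s₀ + s))) ^ 2 = |lam * (s₀ - p.1 + s)| ^ 2 := by rw [sq_abs]; ring
      _ < c ^ 2 := by
          apply pow_lt_pow_left₀ hb1 (abs_nonneg _)
          norm_num
  have hkey : lam ^ 2 * ((p.1 - (s₀ + s)) ^ 2 + ‖z‖ ^ 2) < 1 / 16 := by
    have hexp : lam ^ 2 * ((p.1 - (s₀ + s)) ^ 2 + ‖z‖ ^ 2)
        = (lam * (p.1 - (s₀ + s))) ^ 2 + ∑ k : Fin m, (lam * ⟪p.2 - x₀, e k⟫) ^ 2 := by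
      rw [hnorm, mul_add, Finset.mul_sum]
      congr 1
      · ring
      · exact Finset.sum_congr rfl fun k _ => by ring
    rw [hexp]
    have : (lam * (p.1 - (s₀ + s))) ^ 2 + ∑ k : Fin m, (lam * ⟪p.2 - x₀, e k⟫) ^ 2
        < c ^ 2 + (m:ℝ) * c ^ 2 := by
      exact add_lt_add_of_lt_of_le htime hsum
    calc (lam * (p.1 - (s₀ + s))) ^ 2 + ∑ k : Fin m, (lam * ⟪p.2 - x₀, e k⟫) ^ 2
        < c ^ 2 + (m:ℝ) * c ^ 2 := this
      _ = ((m:ℝ) + 1) * c ^ 2 := by ring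
      _ = 1 / 16 := by rw [hcsq]; field_simp
  have hlt : Real.sqrt ((p.1 - (s₀ + s)) ^ 2 + ‖z‖ ^ 2) < 1 / (4 * lam) := by
    rw [show (1 : ℝ) / (4 * lam) = Real.sqrt ((1 / (4 * lam)) ^ 2) from
      (Real.sqrt_sq (by positivity)).symm]
    apply Real.sqrt_lt_sqrt (by positivity)
    have hl2 : (0:ℝ) < lam ^ 2 := by positivity
    rw [div_pow, mul_pow]
    rw [lt_div_iff₀ (by positivity)]
    nlinarith [hkey]
  exact absurd (hp s) (not_le.2 hlt)
end
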